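/- Let β be a real number with |β| < 1, let S be the shift operator on l²(ℤ, ℂ), and for ν ∈ ℝ, T ∈ ℕ let g_{ν,T}(t) = e^{2πiνt}/√(2T+1) for −T ≤ t ≤ T and 0 otherwise, and z_ν := e^{2πiν}. Then lim_{T→∞} ⟨(I − βS)^{−1} g_{ν,T}, (I − βS)^{−1} g_{ν,T}⟩ = |1 − β z_ν|^{−2}, where ⟨·,·⟩ is the complex l² inner product (anti-linear in the first argument). -/

import Mathlib

open Filter

/-- The normalized complex wave `g_{ν,T}` of frequency `ν` on the window `[-T, T]`:
`g_{ν,T} t = e^{2πiνt} / √(2T+1)` for `-T ≤ t ≤ T` and `0` otherwise. -/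
noncomputable def waveWindow (ν : ℝ) (T : ℕ) : ℤ → ℂ :=
  fun t => if -(T : ℤ) ≤ t ∧ t ≤ (T : ℤ)
    then Complex.exp (2 * Real.pi * Complex.I * (ν : ℂ) * (t : ℂ)) / (Real.sqrt (2 * T + 1) : ℂ)
    else 0

noncomputable def zC (ν : ℝ) : ℂ := Complex.exp (2 * Real.pi * Complex.I * (ν : ℂ))

noncomputable def Sgeo (w : ℂ) (n : ℕ) : ℂ := ∑ j ∈ Finset.range n, w ^ j

lemma zC_ne_zero (ν : ℝ) : zC ν ≠ 0 := Complex.exp_ne_zero _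

lemma norm_zC (ν : ℝ) : ‖zC ν‖ = 1 := by
  rw [zC, Complex.norm_exp]
  norm_num [Complex.exp_eq_one_iff]

lemma wave_apply (ν : ℝ) (T : ℕ) (t : ℤ) :
    waveWindow ν T t = if -(T : ℤ) ≤ t ∧ t ≤ (T : ℤ)
      then (zC ν) ^ t / (Real.sqrt (2 * T + 1) : ℂ) else 0 := by
  rw [waveWindow]
  have : (2 * Real.pi * Complex.I * (ν : ℂ) * (t : ℂ))
      = (t : ℂ) * (2 * Real.pi * Complex.I * (ν : ℂ)) := by ring
  rw [this, Complex.exp_int_mul, zC]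

/-- The von Neumann inverse `(I - βS)⁻¹ = ∑_{j ≥ 0} (βS)^j` applied to a complex
sequence `g`, where `S` is the shift `(S g) t = g (t + 1)`. -/
noncomputable def vonNeumannInvC (β : ℝ) (g : ℤ → ℂ) : ℤ → ℂ :=
  fun t => ∑' j : ℕ, (β : ℂ) ^ j * g (t + j)

lemma inv_case_right {β ν : ℝ} {T : ℕ} {t : ℤ} (h : (T : ℤ) < t) :
    vonNeumannInvC β (waveWindow ν T) t = 0 := by
  rw [vonNeumannInvC]
  convert tsum_zero with j
  rw [wave_apply, if_neg, mul_zero]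
  rintro ⟨-, h2⟩
  omega

lemma inv_case_mid {β ν : ℝ} {T : ℕ} {t : ℤ} (h1 : -(T : ℤ) ≤ t) (h2 : t ≤ (T : ℤ)) :
    vonNeumannInvC β (waveWindow ν T) t
      = (zC ν) ^ t * Sgeo ((β : ℂ) * zC ν) (((T : ℤ) - t).toNat + 1)
        / (Real.sqrt (2 * T + 1) : ℂ) := by
  rw [vonNeumannInvC]
  rw [tsum_eq_sum (s := Finset.range (((T : ℤ) - t).toNat + 1))
    (by
      intro j hj
      simp only [Finset.mem_range, not_lt] at hj
      rw [wave_apply, if_neg, mul_zero]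
      rintro ⟨-, hle⟩
      omega)]
  rw [Sgeo, Finset.mul_sum, Finset.sum_div]
  refine Finset.sum_congr rfl fun j hj => ?_
  simp only [Finset.mem_range] at hj
  rw [wave_apply, if_pos (by constructor <;> omega)]
  rw [zpow_add₀ (zC_ne_zero ν), zpow_natCast, mul_pow]
  ring

lemma inv_case_left {β ν : ℝ} {T : ℕ} {t : ℤ} (h : t < -(T : ℤ)) :
    vonNeumannInvC β (waveWindow ν T) t
      = (zC ν) ^ t * ((β : ℂ) * zC ν) ^ ((-(T : ℤ) - t).toNat)
          * Sgeo ((β : ℂ) * zC ν) (2 * T + 1)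
        / (Real.sqrt (2 * T + 1) : ℂ) := by
  rw [vonNeumannInvC]
  set k : ℕ := (-(T : ℤ) - t).toNat with hk
  have hkz : (k : ℤ) = -(T : ℤ) - t := Int.toNat_of_nonneg (by omega)
  rw [tsum_eq_sum (s := Finset.Ico k (k + (2 * T + 1)))
    (by
      intro j hj
      simp only [Finset.mem_Ico, not_and_or, not_le, not_lt] at hj
      rw [wave_apply, if_neg, mul_zero]
      rintro ⟨hl, hr⟩
      rcases hj with hj | hj <;> omega)]
  rw [Finset.sum_Ico_eq_sum_range]
  simp only [add_tsub_cancel_left]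
  rw [Sgeo, Finset.mul_sum, Finset.sum_div]
  refine Finset.sum_congr rfl fun j hj => ?_
  simp only [Finset.mem_range] at hj
  rw [wave_apply, if_pos (by constructor <;> omega)]
  push_cast
  rw [zpow_add₀ (zC_ne_zero ν), zpow_add₀ (zC_ne_zero ν), zpow_natCast, zpow_natCast,
    mul_pow, mul_pow, pow_add]
  ring

lemma norm_sqrtC (T : ℕ) : ‖((Real.sqrt (2 * T + 1) : ℝ) : ℂ)‖ ^ 2 = ((2 * T + 1 : ℕ) : ℝ) := by
  rw [Complex.norm_real, Real.norm_eq_abs, abs_of_nonneg (Real.sqrt_nonneg _),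
    Real.sq_sqrt (by positivity)]
  push_cast
  ring

lemma normsq_mid {β ν : ℝ} {T : ℕ} {t : ℤ} (h1 : -(T : ℤ) ≤ t) (h2 : t ≤ (T : ℤ)) :
    ‖vonNeumannInvC β (waveWindow ν T) t‖ ^ 2
      = ‖Sgeo ((β : ℂ) * zC ν) (((T : ℤ) - t).toNat + 1)‖ ^ 2 / ((2 * T + 1 : ℕ) : ℝ) := by
  rw [inv_case_mid h1 h2, norm_div, norm_mul, norm_zpow, norm_zC, one_zpow, one_mul,
    div_pow, norm_sqrtC]

lemma normsq_left {β ν : ℝ} {T : ℕ} {t : ℤ} (h : t < -(T : ℤ)) :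
    ‖vonNeumannInvC β (waveWindow ν T) t‖ ^ 2
      = (β ^ 2) ^ ((-(T : ℤ) - t).toNat)
        * (‖Sgeo ((β : ℂ) * zC ν) (2 * T + 1)‖ ^ 2 / ((2 * T + 1 : ℕ) : ℝ)) := by
  rw [inv_case_left h, norm_div, norm_mul, norm_mul, norm_zpow, norm_zC, one_zpow, one_mul,
    div_pow, norm_sqrtC, norm_pow, norm_mul, norm_zC, mul_one, Complex.norm_real,
    Real.norm_eq_abs, mul_pow]
  rw [← pow_mul, mul_comm ((-(T : ℤ) - t).toNat) 2, pow_mul, sq_abs]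
  ring

noncomputable def RT (β ν : ℝ) (T : ℕ) : ℝ :=
  (∑ i ∈ Finset.range (2 * T + 1), ‖Sgeo ((β : ℂ) * zC ν) (i + 1)‖ ^ 2) / ((2 * T + 1 : ℕ) : ℝ)
    + (β ^ 2 * (1 - β ^ 2)⁻¹)
        * (‖Sgeo ((β : ℂ) * zC ν) (2 * T + 1)‖ ^ 2 / ((2 * T + 1 : ℕ) : ℝ))

lemma key (β ν : ℝ) (hβ : |β| < 1) (T : ℕ) :
    ∑' t : ℤ, (starRingEnd ℂ) (vonNeumannInvC β (waveWindow ν T) t)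
        * vonNeumannInvC β (waveWindow ν T) t = ((RT β ν T : ℝ) : ℂ) := by
  have hconv : ∀ z : ℂ, (starRingEnd ℂ) z * z = ((‖z‖ ^ 2 : ℝ) : ℂ) := fun z => by
    rw [← Complex.normSq_eq_conj_mul_self, Complex.normSq_eq_norm_sq]
  simp only [hconv]
  rw [← Complex.ofReal_tsum]
  congr 1
  set f := vonNeumannInvC β (waveWindow ν T) with hf
  have hβ2 : β ^ 2 < 1 := by nlinarith [sq_abs β, abs_nonneg β]
  set c : ℝ := ‖Sgeo ((β : ℂ) * zC ν) (2 * T + 1)‖ ^ 2 / ((2 * T + 1 : ℕ) : ℝ) with hc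
  -- the part of the sum over [-T, T]
  have hG1 : HasSum (fun t : ℤ => if -(T : ℤ) ≤ t then ‖f t‖ ^ 2 else 0)
      ((∑ i ∈ Finset.range (2 * T + 1), ‖Sgeo ((β : ℂ) * zC ν) (i + 1)‖ ^ 2)
        / ((2 * T + 1 : ℕ) : ℝ)) := by
    have h0 : ∀ t : ℤ, t ∉ Finset.Icc (-(T : ℤ)) (T : ℤ) →
        (if -(T : ℤ) ≤ t then ‖f t‖ ^ 2 else 0) = 0 := by
      intro t ht
      simp only [Finset.mem_Icc, not_and_or, not_le] at ht
      rcases ht with ht | ht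
      · rw [if_neg (by omega)]
      · rw [if_pos (by omega), hf, inv_case_right ht, norm_zero]
        ring
    have h1 := hasSum_sum_of_ne_finset_zero (L := SummationFilter.unconditional ℤ) h0
    have h2 : ∑ t ∈ Finset.Icc (-(T : ℤ)) (T : ℤ), (if -(T : ℤ) ≤ t then ‖f t‖ ^ 2 else 0)
        = (∑ i ∈ Finset.range (2 * T + 1), ‖Sgeo ((β : ℂ) * zC ν) (i + 1)‖ ^ 2)
          / ((2 * T + 1 : ℕ) : ℝ) := by
      rw [Finset.sum_div]
      refine Finset.sum_nbij' (i := fun t => ((T : ℤ) - t).toNat)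
          (j := fun i : ℕ => (T : ℤ) - i) ?_ ?_ ?_ ?_ ?_
      · intro t ht
        simp only [Finset.mem_Icc] at ht
        simp only [Finset.mem_range]
        omega
      · intro i hi
        simp only [Finset.mem_range] at hi
        simp only [Finset.mem_Icc]
        omega
      · intro t ht
        simp only [Finset.mem_Icc] at ht
        show (T : ℤ) - (((T : ℤ) - t).toNat : ℤ) = t
        omega
      · intro i hi
        simp only [Finset.mem_range] at hi
        show (((T : ℤ) - ((T : ℤ) - (i : ℕ))).toNat) = i
        omega
      · intro t ht
        simp only [Finset.mem_Icc] at ht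
        rw [if_pos ht.1, hf, normsq_mid ht.1 ht.2]
    rw [h2] at h1
    exact h1
  -- the part of the sum over t < -T
  have hG2 : HasSum (fun t : ℤ => if t < -(T : ℤ) then ‖f t‖ ^ 2 else 0)
      (β ^ 2 * (1 - β ^ 2)⁻¹ * c) := by
    set e : ℕ → ℤ := fun k => -(T : ℤ) - 1 - k with he
    have hinj : Function.Injective e := by
      intro a b hab
      simp only [he] at hab
      omega
    have hsupp : ∀ t : ℤ, t ∉ Set.range e →
        (if t < -(T : ℤ) then ‖f t‖ ^ 2 else 0) = 0 := by
      intro t ht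
      rw [if_neg]
      intro hlt
      exact ht ⟨(-(T : ℤ) - 1 - t).toNat, by simp only [he]; omega⟩
    rw [← hinj.hasSum_iff hsupp]
    have hcomp : ((fun t : ℤ => if t < -(T : ℤ) then ‖f t‖ ^ 2 else 0) ∘ e)
        = fun k : ℕ => (β ^ 2 * c) * (β ^ 2) ^ k := by
      funext k
      simp only [Function.comp_apply, he]
      rw [if_pos (by omega), hf, normsq_left (by omega)]
      have : (-(T : ℤ) - (-(T : ℤ) - 1 - k)).toNat = k + 1 := by omega
      rw [this, pow_succ]
      ring
    rw [hcomp]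
    have hgeo : HasSum (fun k : ℕ => (β ^ 2) ^ k) ((1 - β ^ 2)⁻¹) :=
      hasSum_geometric_of_lt_one (sq_nonneg β) hβ2
    have := hgeo.mul_left (β ^ 2 * c)
    rw [show β ^ 2 * (1 - β ^ 2)⁻¹ * c = β ^ 2 * c * (1 - β ^ 2)⁻¹ by ring]
    exact this
  have hsum := hG1.add hG2
  have hfun : (fun t : ℤ => (if -(T : ℤ) ≤ t then ‖f t‖ ^ 2 else 0)
      + (if t < -(T : ℤ) then ‖f t‖ ^ 2 else 0)) = fun t : ℤ => ‖f t‖ ^ 2 := by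
    funext t
    by_cases h : -(T : ℤ) ≤ t
    · rw [if_pos h, if_neg (by omega), add_zero]
    · rw [if_neg h, if_pos (by omega), zero_add]
  rw [hfun] at hsum
  rw [hsum.tsum_eq]
  simp only [RT, hc]

lemma RT_tendsto (β ν : ℝ) (hβ : |β| < 1) :
    Tendsto (fun T : ℕ => RT β ν T) atTop
      (nhds ((‖(1 : ℂ) - (β : ℂ) * zC ν‖ ^ 2)⁻¹)) := by
  simp only [RT]
  set w : ℂ := (β : ℂ) * zC ν with hw
  have hwn : ‖w‖ < 1 := by
    rw [hw, norm_mul, norm_zC, mul_one, Complex.norm_real, Real.norm_eq_abs]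
    exact hβ
  set L : ℝ := (‖(1 : ℂ) - w‖ ^ 2)⁻¹ with hL
  have hS : Tendsto (fun n : ℕ => ‖Sgeo w n‖ ^ 2) atTop (nhds L) := by
    have h1 := (hasSum_geometric_of_norm_lt_one hwn).tendsto_sum_nat
    have h2 := (h1.norm).pow 2
    simpa [Sgeo, norm_inv, inv_pow] using h2
  have hN : Tendsto (fun T : ℕ => 2 * T + 1) atTop atTop := by
    apply tendsto_atTop_atTop_of_monotone
    · intro a b hab
      show 2 * a + 1 ≤ 2 * b + 1
      omega
    · intro b
      refine ⟨b, ?_⟩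
      show b ≤ 2 * b + 1
      omega
  have hterm1 : Tendsto (fun T : ℕ => (∑ i ∈ Finset.range (2 * T + 1), ‖Sgeo w (i + 1)‖ ^ 2)
      / ((2 * T + 1 : ℕ) : ℝ)) atTop (nhds L) := by
    have hu : Tendsto (fun i : ℕ => ‖Sgeo w (i + 1)‖ ^ 2) atTop (nhds L) :=
      hS.comp (tendsto_add_atTop_nat 1)
    refine Tendsto.congr (fun T => ?_) (hu.cesaro.comp hN)
    rw [Function.comp_apply, div_eq_inv_mul]
  have hinv : Tendsto (fun T : ℕ => ((2 * T + 1 : ℕ) : ℝ)⁻¹) atTop (nhds 0) :=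
    tendsto_inv_atTop_zero.comp (tendsto_natCast_atTop_atTop.comp hN)
  have hterm2 : Tendsto (fun T : ℕ => (β ^ 2 * (1 - β ^ 2)⁻¹)
      * (‖Sgeo w (2 * T + 1)‖ ^ 2 / ((2 * T + 1 : ℕ) : ℝ))) atTop (nhds 0) := by
    have h3 : Tendsto (fun T : ℕ => ‖Sgeo w (2 * T + 1)‖ ^ 2 * ((2 * T + 1 : ℕ) : ℝ)⁻¹)
        atTop (nhds (L * 0)) := (hS.comp hN).mul hinv
    rw [mul_zero] at h3
    have h4 := h3.const_mul (β ^ 2 * (1 - β ^ 2)⁻¹)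
    rw [mul_zero] at h4
    simpa [div_eq_mul_inv] using h4
  have h := hterm1.add hterm2
  rw [add_zero] at h
  exact h

/-- For `|β| < 1` and `z_ν = e^{2πiν}`, the complex `l²` inner
product (anti-linear in its first argument) satisfies
`⟨(I - βS)⁻¹ g_{ν,T}, (I - βS)⁻¹ g_{ν,T}⟩ → |1 - β z_ν|⁻²` as `T → ∞`. -/
theorem stmt_15 (β : ℝ) (hβ : |β| < 1) (ν : ℝ) :
    Tendsto (fun T : ℕ =>
        ∑' t : ℤ, (starRingEnd ℂ) (vonNeumannInvC β (waveWindow ν T) t)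
          * vonNeumannInvC β (waveWindow ν T) t)
      atTop (nhds (((‖(1 : ℂ) - (β : ℂ) * Complex.exp (2 * Real.pi * Complex.I * (ν : ℂ))‖ ^ 2)⁻¹ : ℝ) : ℂ)) := by
  have h := RT_tendsto β ν hβ
  have h2 := (Complex.continuous_ofReal.tendsto _).comp h
  have hfun : (fun T : ℕ =>
      ∑' t : ℤ, (starRingEnd ℂ) (vonNeumannInvC β (waveWindow ν T) t)
        * vonNeumannInvC β (waveWindow ν T) t)
      = fun T : ℕ => ((RT β ν T : ℝ) : ℂ) := by
    funext T
    exact key β ν hβ T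
  rw [hfun]
  exact h2
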